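/- For every positive integer n, the natural map from the dihedral quandle R_{2n} to its enveloping group G_{R_{2n}} is injective. -/

import Mathlib

open Quandles

/-- The embedding of the dihedral quandle into the conjugation quandle of the
dihedral group, sending `i` to the reflection `sr i`. -/
def dihedralToConj (m : ℕ) :
    Quandle.Dihedral m →◃ Quandle.Conj (DihedralGroup m) where
  toFun := DihedralGroup.sr
  map_act' := by
    intro (a : ZMod m) (b : ZMod m)
    show DihedralGroup.sr (Quandle.dihedralAct m a b) =
      DihedralGroup.sr a * DihedralGroup.sr b * (DihedralGroup.sr a)⁻¹
    rw [show (DihedralGroup.sr a)⁻¹ = DihedralGroup.sr a from rfl]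
    rw [DihedralGroup.sr_mul_sr, DihedralGroup.r_mul_sr]
    unfold Quandle.dihedralAct
    ring_nf

/-- For every positive integer `n`, the natural map from the dihedral quandle `R_{2n}`
to its enveloping group is injective. -/
theorem dihedral_toEnvelGroup_injective (n : ℕ) (hn : 0 < n) :
    Function.Injective
      (Rack.toEnvelGroup (Quandle.Dihedral (2 * n)) :
        Quandle.Dihedral (2 * n) → Quandle.Conj (Rack.EnvelGroup (Quandle.Dihedral (2 * n)))) := by
  intro x y h
  have := congrArg (Rack.toEnvelGroup.map (dihedralToConj (2 * n))) h
  have hx := congrFun (congrArg ShelfHom.toFun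
    (Rack.toEnvelGroup.univ (Quandle.Dihedral (2 * n)) (DihedralGroup (2 * n))
      (dihedralToConj (2 * n)))) x
  have hy := congrFun (congrArg ShelfHom.toFun
    (Rack.toEnvelGroup.univ (Quandle.Dihedral (2 * n)) (DihedralGroup (2 * n))
      (dihedralToConj (2 * n)))) y
  simp only [ShelfHom.comp, Quandle.Conj.map] at hx hy
  have : (dihedralToConj (2 * n)).toFun x = (dihedralToConj (2 * n)).toFun y := by
    rw [← hx, ← hy]; exact this
  exact DihedralGroup.sr.inj this
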